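/- Let d ∈ ℝ and k_q, k_e > 0, let θ : [0,∞) → ℝ be continuous, and let q̃ : [0,∞) → ℝ², ẽ : [0,∞) → ℝ³ be differentiable solutions of q̃′(t) = −k_q · q̃(t) − C̄(θ(t))ᵀ ẽ(t), ẽ′(t) = C̄(θ(t)) q̃(t) − k_e · (0, ẽ₂(t), ẽ₃(t)), where C̄(θ) is the 3×2 matrix with rows (0, 1), (cos θ, −d sin θ), (sin θ, d cos θ). Set V(0) = ½‖q̃(0)‖² + ½‖ẽ(0)‖². Then for every t ≥ 0, ‖q̃(t)‖ ≤ √(2 V(0)) and ‖ẽ(t)‖ ≤ √(2 V(0)); in particular q̃ and ẽ are bounded on [0,∞). -/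

import Mathlib

open Matrix Filter Real

/-- The 3×2 kinematic matrix `C̄(θ)` of the DDWMR, with rows
`(0, 1)`, `(cos θ, −d sin θ)`, `(sin θ, d cos θ)`. -/
noncomputable def Cbar (d θ : ℝ) : Matrix (Fin 3) (Fin 2) ℝ :=
  !![0, 1; Real.cos θ, -d * Real.sin θ; Real.sin θ, d * Real.cos θ]

/-- Boundedness of the DDWMR closed-loop tracking errors: along the error
dynamics, for every `t ≥ 0` the Euclidean norms satisfy
`‖q̃(t)‖ ≤ √(2 V(0))` and `‖ẽ(t)‖ ≤ √(2 V(0))`, where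
`V(0) = ½‖q̃(0)‖² + ½‖ẽ(0)‖²`. -/
theorem ddwmr_tracking_errors_bounded
    (d kq ke : ℝ) (hkq : 0 < kq) (hke : 0 < ke)
    (θ : ℝ → ℝ) (hθ : ContinuousOn θ (Set.Ici (0 : ℝ)))
    (qt : ℝ → (Fin 2 → ℝ)) (et : ℝ → (Fin 3 → ℝ))
    (hq : ∀ t, 0 ≤ t →
      HasDerivAt qt ((-kq) • qt t - (Cbar d (θ t))ᵀ.mulVec (et t)) t)
    (he : ∀ t, 0 ≤ t →
      HasDerivAt et ((Cbar d (θ t)).mulVec (qt t) - ke • ![(0 : ℝ), et t 1, et t 2]) t)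
    (V0 : ℝ)
    (hV0 : V0 = (1 / 2) * (∑ i, (qt 0 i) ^ 2) + (1 / 2) * (∑ i, (et 0 i) ^ 2)) :
    ∀ t, 0 ≤ t →
      Real.sqrt (∑ i, (qt t i) ^ 2) ≤ Real.sqrt (2 * V0) ∧
      Real.sqrt (∑ i, (et t i) ^ 2) ≤ Real.sqrt (2 * V0) := by
  set f : ℝ → ℝ := fun s => (1/2) * (∑ i, (qt s i)^2) + (1/2) * (∑ i, (et s i)^2) with hf
  have key : ∀ s, 0 ≤ s → HasDerivAt f
      (-kq * (∑ i, (qt s i)^2) - ke * ((et s 1)^2 + (et s 2)^2)) s := by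
    intro s hs
    have hq' := hasDerivAt_pi.mp (hq s hs)
    have he' := hasDerivAt_pi.mp (he s hs)
    have Hq : HasDerivAt (fun u => (1/2) * ∑ i, (qt u i)^2)
        ((1/2) * ∑ i : Fin 2, ((2:ℕ) * qt s i ^ 1 *
          ((-kq) • qt s - (Cbar d (θ s))ᵀ.mulVec (et s)) i)) s :=
      (HasDerivAt.fun_sum (fun i _ => (hq' i).pow 2)).const_mul _
    have He : HasDerivAt (fun u => (1/2) * ∑ i, (et u i)^2)
        ((1/2) * ∑ i : Fin 3, ((2:ℕ) * et s i ^ 1 *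
          ((Cbar d (θ s)).mulVec (qt s) - ke • ![(0:ℝ), et s 1, et s 2]) i)) s :=
      (HasDerivAt.fun_sum (fun i _ => (he' i).pow 2)).const_mul _
    have H := Hq.add He
    refine (H : HasDerivAt f _ s).congr_deriv ?_
    simp [Cbar, Matrix.mulVec, dotProduct, Fin.sum_univ_succ,
      Matrix.transpose_apply, Fin.isValue]
    ring
  have hcont : ContinuousOn f (Set.Ici 0) := fun s hs =>
    ((key s hs).continuousAt).continuousWithinAt
  have hanti : AntitoneOn f (Set.Ici 0) := by
    apply antitoneOn_of_deriv_nonpos (convex_Ici 0) hcont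
    · intro s hs
      rw [interior_Ici] at hs
      exact ((key s hs.le).differentiableAt).differentiableWithinAt
    · intro s hs
      rw [interior_Ici] at hs
      rw [(key s hs.le).deriv]
      have h1 : 0 ≤ ∑ i, (qt s i)^2 := Finset.sum_nonneg fun i _ => sq_nonneg _
      nlinarith [sq_nonneg (et s 1), sq_nonneg (et s 2)]
  intro t ht
  have hle : f t ≤ f 0 := hanti (Set.self_mem_Ici) ht ht
  have hf0 : f 0 = V0 := by rw [hV0]
  have hQ : 0 ≤ ∑ i, (qt t i)^2 := Finset.sum_nonneg fun i _ => sq_nonneg _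
  have hE : 0 ≤ ∑ i, (et t i)^2 := Finset.sum_nonneg fun i _ => sq_nonneg _
  have hle' : (1/2) * (∑ i, (qt t i)^2) + (1/2) * (∑ i, (et t i)^2) ≤ V0 := by
    rw [hf0] at hle; exact hle
  constructor
  · exact Real.sqrt_le_sqrt (by linarith)
  · exact Real.sqrt_le_sqrt (by linarith)
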